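/- If f : L_1 × ⋯ × L_n → L is pseudo-median decomposable w.r.t. unary maps φ_i : L_i → L (i = 1,…,n) satisfying the boundary conditions, then for every x, f(x_1,…,x_n) = ⋁_{I ⊆ {1,…,n}} ( f(e_I) ∧ ⋀_{i∈I} φ_i(x_i) ); in other words f(x) = p(φ_1(x_1),…,φ_n(x_n)) where p is the polynomial function p(y_1,…,y_n) = ⋁_{I ⊆ {1,…,n}} ( f(e_I) ∧ ⋀_{i∈I} y_i ). -/

import Mathlib

open Function

/-- A lattice polynomial function on a chain `M`: a member of the smallest set of `n`-ary
functions containing all projections and constants and closed under pointwise `⊓` and `⊔`. -/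
inductive IsLatticePolynomial {M : Type*} [LinearOrder M] {n : ℕ} :
    ((Fin n → M) → M) → Prop
  | proj (i : Fin n) : IsLatticePolynomial fun x => x i
  | const (c : M) : IsLatticePolynomial fun _ => c
  | inf {p q : (Fin n → M) → M} :
      IsLatticePolynomial p → IsLatticePolynomial q →
      IsLatticePolynomial fun x => p x ⊓ q x
  | sup {p q : (Fin n → M) → M} :
      IsLatticePolynomial p → IsLatticePolynomial q →
      IsLatticePolynomial fun x => p x ⊔ q x

/-- A Sugeno integral: an idempotent lattice polynomial function. -/
def IsSugenoIntegral {M : Type*} [LinearOrder M] {n : ℕ} (q : (Fin n → M) → M) : Prop :=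
  IsLatticePolynomial q ∧ ∀ c : M, q (fun _ => c) = c

/-- `φ` satisfies the boundary conditions: `φ 0 ≤ φ x ≤ φ 1` for all `x`. -/
def BoundaryCond {α : Type*} {M : Type*} [LE α] [OrderTop α] [OrderBot α] [Preorder M]
    (φ : α → M) : Prop :=
  ∀ x : α, φ ⊥ ≤ φ x ∧ φ x ≤ φ ⊤

/-- The median of three elements of a lattice. -/
def med {α : Type*} [Lattice α] (a b c : α) : α :=
  (a ⊓ b) ⊔ (a ⊓ c) ⊔ (b ⊓ c)

/-- Two `n`-tuples are comonotonic if some permutation sorts both simultaneously. -/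
def Comonotone {M : Type*} [Preorder M] {n : ℕ} (y y' : Fin n → M) : Prop :=
  ∃ σ : Equiv.Perm (Fin n), Monotone (y ∘ σ) ∧ Monotone (y' ∘ σ)

section PiDefs

variable {n : ℕ} {M : Type*} {L : Fin n → Type*}
variable [∀ i, LinearOrder (L i)] [∀ i, BoundedOrder (L i)]
variable [LinearOrder M] [BoundedOrder M]

/-- A pseudo-polynomial function: composition of a lattice polynomial function with unary
maps satisfying the boundary conditions. -/
def IsPseudoPolynomial (f : (∀ i, L i) → M) : Prop :=
  ∃ (p : (Fin n → M) → M) (φ : ∀ i, L i → M),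
    IsLatticePolynomial p ∧ (∀ i, BoundaryCond (φ i)) ∧
      ∀ x, f x = p fun i => φ i (x i)

/-- A pseudo-Sugeno integral: composition of a Sugeno integral with unary maps satisfying
the boundary conditions. -/
def IsPseudoSugenoIntegral (f : (∀ i, L i) → M) : Prop :=
  ∃ (q : (Fin n → M) → M) (φ : ∀ i, L i → M),
    IsSugenoIntegral q ∧ (∀ i, BoundaryCond (φ i)) ∧
      ∀ x, f x = q fun i => φ i (x i)

/-- A Sugeno utility function: composition of a Sugeno integral with local utility
(order-preserving) functions. -/
def IsSugenoUtility (f : (∀ i, L i) → M) : Prop :=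
  ∃ (q : (Fin n → M) → M) (φ : ∀ i, L i → M),
    IsSugenoIntegral q ∧ (∀ i, Monotone (φ i)) ∧
      ∀ x, f x = q fun i => φ i (x i)

/-- `f` is pseudo-median decomposable w.r.t. the unary maps `φ`. -/
def PseudoMedianDecomp (f : (∀ i, L i) → M) (φ : ∀ i, L i → M) : Prop :=
  ∀ (x : ∀ i, L i) (k : Fin n),
    f x = med (f (update x k ⊥)) (φ k (x k)) (f (update x k ⊤))

/-- `d ∈ φ̄⁻¹(c)`: all components of `d` are mapped to `c` by the corresponding `φ i`. -/
def FiberAll (φ : ∀ i, L i → M) (c : M) (d : ∀ i, L i) : Prop :=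
  ∀ i, φ i (d i) = c

/-- `f` is pseudo-min homogeneous w.r.t. `φ` with common range `R`. -/
def PseudoMinHomog (f : (∀ i, L i) → M) (φ : ∀ i, L i → M) (R : Set M) : Prop :=
  ∀ (x : ∀ i, L i), ∀ c ∈ R, ∀ d : ∀ i, L i, FiberAll φ c d →
    f (fun i => x i ⊓ d i) = f x ⊓ c

/-- `f` is pseudo-max homogeneous w.r.t. `φ` with common range `R`. -/
def PseudoMaxHomog (f : (∀ i, L i) → M) (φ : ∀ i, L i → M) (R : Set M) : Prop :=
  ∀ (x : ∀ i, L i), ∀ c ∈ R, ∀ d : ∀ i, L i, FiberAll φ c d →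
    f (fun i => x i ⊔ d i) = f x ⊔ c

/-- Condition (PI): `f d = c` whenever `d ∈ φ̄⁻¹(c)`, `c ∈ R`. -/
def PseudoPI (f : (∀ i, L i) → M) (φ : ∀ i, L i → M) (R : Set M) : Prop :=
  ∀ c ∈ R, ∀ d : ∀ i, L i, FiberAll φ c d → f d = c

/-- `[x]_d`: the tuple whose `i`th component is `0` if `x i ≤ d i`, and `x i` otherwise. -/
def cutBelow (x d : ∀ i, L i) : ∀ i, L i := fun i => if x i ≤ d i then ⊥ else x i

/-- `[x]^d`: the tuple whose `i`th component is `1` if `x i ≥ d i`, and `x i` otherwise. -/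
def cutAbove (x d : ∀ i, L i) : ∀ i, L i := fun i => if d i ≤ x i then ⊤ else x i

/-- `f` is pseudo-horizontally maxitive w.r.t. `φ` with common range `R`. -/
def PseudoHorizMax (f : (∀ i, L i) → M) (φ : ∀ i, L i → M) (R : Set M) : Prop :=
  ∀ (x : ∀ i, L i), ∀ c ∈ R, ∀ d : ∀ i, L i, FiberAll φ c d →
    f x = f (fun i => x i ⊓ d i) ⊔ f (cutBelow x d)

/-- `f` is pseudo-horizontally minitive w.r.t. `φ` with common range `R`. -/
def PseudoHorizMin (f : (∀ i, L i) → M) (φ : ∀ i, L i → M) (R : Set M) : Prop :=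
  ∀ (x : ∀ i, L i), ∀ c ∈ R, ∀ d : ∀ i, L i, FiberAll φ c d →
    f x = f (fun i => x i ⊔ d i) ⊓ f (cutAbove x d)

/-- `f` is pseudo-comonotonic minitive w.r.t. `φ`. -/
def PseudoComonMin (f : (∀ i, L i) → M) (φ : ∀ i, L i → M) : Prop :=
  ∀ x x' : ∀ i, L i,
    Comonotone (fun i => φ i (x i)) (fun i => φ i (x' i)) →
      f (fun i => x i ⊓ x' i) = f x ⊓ f x'

/-- `f` is pseudo-comonotonic maxitive w.r.t. `φ`. -/
def PseudoComonMax (f : (∀ i, L i) → M) (φ : ∀ i, L i → M) : Prop :=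
  ∀ x x' : ∀ i, L i,
    Comonotone (fun i => φ i (x i)) (fun i => φ i (x' i)) →
      f (fun i => x i ⊔ x' i) = f x ⊔ f x'

/-- The disjunctive normal form polynomial determined by the values of `f` on the
characteristic vectors `e_I`: `y ↦ ⋁_{I ⊆ [n]} (f(e_I) ∧ ⋀_{i ∈ I} y i)`. -/
def qDNF (f : (∀ i, L i) → M) : (Fin n → M) → M :=
  fun y => Finset.univ.sup fun I : Finset (Fin n) =>
    f (fun i => if i ∈ I then ⊤ else ⊥) ⊓ I.inf y

end PiDefs

section ChainDefs

variable {n : ℕ} {M : Type*} [LinearOrder M] [BoundedOrder M]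

/-- The DNF polynomial `y ↦ ⋁_{I ⊆ [n]} (p(e_I) ∧ ⋀_{i ∈ I} y i)` for `p : M^n → M`. -/
def polyDNF (p : (Fin n → M) → M) : (Fin n → M) → M :=
  fun y => Finset.univ.sup fun I : Finset (Fin n) =>
    p (fun i => if i ∈ I then ⊤ else ⊥) ⊓ I.inf y

/-- The convex hull of the range of `p` (in a chain). -/
def clRan (p : (Fin n → M) → M) : Set M :=
  {c : M | ∃ a ∈ Set.range p, ∃ b ∈ Set.range p, a ≤ c ∧ c ≤ b}

/-- Median decomposability of `p : M^n → M`. -/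
def MedianDecomp (p : (Fin n → M) → M) : Prop :=
  ∀ (x : Fin n → M) (k : Fin n),
    p x = med (p (update x k ⊥)) (x k) (p (update x k ⊤))

/-- `S`-min homogeneity: `p(x ∧ c) = p(x) ∧ c` for all `c ∈ S`. -/
def MinHomogOn (p : (Fin n → M) → M) (S : Set M) : Prop :=
  ∀ (x : Fin n → M), ∀ c ∈ S, p (fun i => x i ⊓ c) = p x ⊓ c

/-- `S`-max homogeneity: `p(x ∨ c) = p(x) ∨ c` for all `c ∈ S`. -/
def MaxHomogOn (p : (Fin n → M) → M) (S : Set M) : Prop :=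
  ∀ (x : Fin n → M), ∀ c ∈ S, p (fun i => x i ⊔ c) = p x ⊔ c

/-- Range-idempotence: `p(c,…,c) = c` for every `c` in the convex hull of the range. -/
def RangeIdempotent (p : (Fin n → M) → M) : Prop :=
  ∀ c ∈ clRan p, p (fun _ => c) = c

/-- Horizontal minitivity: `p(x) = p(x ∨ c) ∧ p([x]^c)`. -/
def HorizMin (p : (Fin n → M) → M) : Prop :=
  ∀ (x : Fin n → M) (c : M),
    p x = p (fun i => x i ⊔ c) ⊓ p (fun i => if c ≤ x i then ⊤ else x i)

/-- Horizontal maxitivity: `p(x) = p(x ∧ c) ∨ p([x]_c)`. -/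
def HorizMax (p : (Fin n → M) → M) : Prop :=
  ∀ (x : Fin n → M) (c : M),
    p x = p (fun i => x i ⊓ c) ⊔ p (fun i => if x i ≤ c then ⊥ else x i)

end ChainDefs

section Aux

variable {n : ℕ} {M : Type*} [LinearOrder M]

lemma isLatticePolynomial_finsetSup {ι : Type*} [OrderBot M] (s : Finset ι)
    (p : ι → (Fin n → M) → M) (h : ∀ i ∈ s, IsLatticePolynomial (p i)) :
    IsLatticePolynomial (fun x => s.sup fun i => p i x) := by
  classical
  induction s using Finset.induction_on with
  | empty => simpa using IsLatticePolynomial.const (⊥ : M)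
  | insert a s hni ih =>
    simp only [Finset.sup_insert]
    exact IsLatticePolynomial.sup (h a (Finset.mem_insert_self a s))
      (ih fun i hi => h i (Finset.mem_insert_of_mem hi))

lemma isLatticePolynomial_finsetInf [OrderTop M] (s : Finset (Fin n)) :
    IsLatticePolynomial (fun x : Fin n → M => s.inf x) := by
  classical
  induction s using Finset.induction_on with
  | empty => simpa using IsLatticePolynomial.const (⊤ : M)
  | insert a s hni ih =>
    simp only [Finset.inf_insert]
    exact IsLatticePolynomial.inf (IsLatticePolynomial.proj a) ih

lemma med_of_le {a b c : M} (hac : a ≤ c) : med a b c = a ⊔ (b ⊓ c) := by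
  simp only [med, inf_eq_left.mpr hac]
  rw [sup_eq_right.mpr (inf_le_left : a ⊓ b ≤ a)]

end Aux

section AuxPi

variable {n : ℕ} {M : Type*} {L : Fin n → Type*}
variable [∀ i, LinearOrder (L i)] [∀ i, BoundedOrder (L i)]
variable [LinearOrder M] [BoundedOrder M]

lemma endpoints_le (f : (∀ i, L i) → M) (φ : ∀ i, L i → M)
    (hφ : ∀ i, BoundaryCond (φ i)) (hmed : PseudoMedianDecomp f φ)
    (x : ∀ i, L i) (k : Fin n) : f (update x k ⊥) ≤ f (update x k ⊤) := by
  set a := f (update x k ⊥) with ha'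
  set c := f (update x k ⊤) with hc'
  have ha : a = med a (φ k ⊥) c := by
    have := hmed (update x k ⊥) k
    simpa [Function.update_idem] using this
  have hc : c = med a (φ k ⊤) c := by
    have := hmed (update x k ⊤) k
    simpa [Function.update_idem] using this
  have h1 : a ≤ φ k ⊥ ⊔ c := by
    conv_lhs => rw [ha]
    refine sup_le (sup_le ?_ ?_) ?_
    · exact inf_le_right.trans le_sup_left
    · exact inf_le_right.trans le_sup_right
    · exact inf_le_right.trans le_sup_right
  have h2 : a ⊓ φ k ⊤ ≤ c := by
    conv_rhs => rw [hc]
    exact le_sup_of_le_left le_sup_left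
  rcases le_sup_iff.mp h1 with h | h
  · have : a ≤ φ k ⊤ := h.trans (hφ k ⊥).2
    calc a = a ⊓ φ k ⊤ := (inf_eq_left.mpr this).symm
    _ ≤ c := h2
  · exact h

lemma pseudoMedianDecomp_dnf_aux (f : (∀ i, L i) → M) (φ : ∀ i, L i → M)
    (hφ : ∀ i, BoundaryCond (φ i)) (hmed : PseudoMedianDecomp f φ) :
    ∀ x, f x = (Finset.univ : Finset (Finset (Fin n))).sup fun I =>
        f (fun i => if i ∈ I then ⊤ else ⊥) ⊓ I.inf fun i => φ i (x i) := by
  classical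
  intro x
  -- masked tuple and the partial DNF term
  set y : ℕ → Finset (Fin n) → ∀ i, L i :=
    fun k J i => if (i : ℕ) < k then (if i ∈ J then ⊤ else ⊥) else x i with hy
  set T : ℕ → Finset (Fin n) → M :=
    fun k J => f (y k J) ⊓ (J.filter fun i : Fin n => (i : ℕ) < k).inf fun i => φ i (x i) with hT
  have key : ∀ k, k ≤ n → f x = (Finset.univ : Finset (Finset (Fin n))).sup (T k) := by
    intro k hk
    induction k with
    | zero =>
      have h0 : ∀ J : Finset (Fin n), T 0 J = f x := by
        intro J
        have hy0 : y 0 J = x := by funext i; simp [hy]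
        have hf0 : (J.filter fun i : Fin n => (i : ℕ) < 0) = ∅ := by
          apply Finset.filter_false_of_mem; intro i _; omega
        simp [hT, hy0, hf0]
      rw [Finset.sup_congr rfl (fun J _ => h0 J)]
      exact (Finset.sup_const Finset.univ_nonempty (f x)).symm
    | succ k ih =>
      have hk' : k < n := hk
      set kk : Fin n := ⟨k, hk'⟩ with hkk
      rw [ih (Nat.le_of_succ_le hk)]
      -- per-set identity
      have hstep : ∀ J : Finset (Fin n),
          T k J = T (k + 1) (J.erase kk) ⊔ T (k + 1) (insert kk J) := by
        intro J
        have hbot : update (y k J) kk ⊥ = y (k + 1) (J.erase kk) := by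
          funext i
          rcases eq_or_ne i kk with rfl | hi
          · simp [hy, hkk]
          · have hik : (i : ℕ) ≠ k := fun h => hi (Fin.ext h)
            have : ((i : ℕ) < k + 1) ↔ ((i : ℕ) < k) := by omega
            simp [Function.update_of_ne hi, hy, this, Finset.mem_erase, hi]
        have htop : update (y k J) kk ⊤ = y (k + 1) (insert kk J) := by
          funext i
          rcases eq_or_ne i kk with rfl | hi
          · simp [hy, hkk]
          · have hik : (i : ℕ) ≠ k := fun h => hi (Fin.ext h)
            have : ((i : ℕ) < k + 1) ↔ ((i : ℕ) < k) := by omega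
            simp [Function.update_of_ne hi, hy, this, Finset.mem_insert, hi]
        have hyk : y k J kk = x kk := by simp [hy, hkk]
        have hle : f (y (k + 1) (J.erase kk)) ≤ f (y (k + 1) (insert kk J)) := by
          rw [← hbot, ← htop]; exact endpoints_le f φ hφ hmed _ _
        have hf : f (y k J) =
            f (y (k + 1) (J.erase kk)) ⊔ (φ kk (x kk) ⊓ f (y (k + 1) (insert kk J))) := by
          have h := hmed (y k J) kk
          rw [hyk, hbot, htop] at h
          rw [h, med_of_le hle]
        have hfe : ((J.erase kk).filter fun i : Fin n => (i : ℕ) < k + 1)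
            = J.filter fun i : Fin n => (i : ℕ) < k := by
          ext i
          simp only [Finset.mem_filter, Finset.mem_erase]
          constructor
          · rintro ⟨⟨hne, hJ⟩, hlt⟩
            have : (i : ℕ) ≠ k := fun h => hne (Fin.ext h)
            exact ⟨hJ, by omega⟩
          · rintro ⟨hJ, hlt⟩
            exact ⟨⟨fun h => absurd hlt (by simp [h, hkk]), hJ⟩, by omega⟩
        have hfi : ((insert kk J).filter fun i : Fin n => (i : ℕ) < k + 1)
            = insert kk (J.filter fun i : Fin n => (i : ℕ) < k) := by
          ext i
          simp only [Finset.mem_filter, Finset.mem_insert]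
          constructor
          · rintro ⟨h1, hlt⟩
            rcases h1 with rfl | hJ
            · exact Or.inl rfl
            · rcases eq_or_ne i kk with rfl | hne
              · exact Or.inl rfl
              · have : (i : ℕ) ≠ k := fun h => hne (Fin.ext h)
                exact Or.inr ⟨hJ, by omega⟩
          · rintro (rfl | ⟨hJ, hlt⟩)
            · exact ⟨Or.inl rfl, by simp [hkk]⟩
            · exact ⟨Or.inr hJ, by omega⟩
        have hkk_not : kk ∉ J.filter fun i : Fin n => (i : ℕ) < k := by
          simp [Finset.mem_filter, hkk]
        rw [hT]
        simp only [hf, hfe, hfi, Finset.inf_insert]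
        rw [inf_sup_right]
        congr 1
        ac_rfl
      rw [Finset.sup_congr rfl (fun J _ => hstep J)]
      apply le_antisymm
      · apply Finset.sup_le
        intro J _
        exact sup_le (Finset.le_sup (Finset.mem_univ _)) (Finset.le_sup (Finset.mem_univ _))
      · apply Finset.sup_le
        intro J _
        by_cases hJ : kk ∈ J
        · have : insert kk J = J := Finset.insert_eq_self.mpr hJ
          refine le_trans ?_ (Finset.le_sup (Finset.mem_univ J))
          rw [this]; exact le_sup_right
        · have : J.erase kk = J := Finset.erase_eq_of_notMem hJ
          refine le_trans ?_ (Finset.le_sup (Finset.mem_univ J))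
          rw [this]; exact le_sup_left
  have hfin := key n le_rfl
  rw [hfin]
  apply Finset.sup_congr rfl
  intro J _
  have hyn : y n J = fun i => if i ∈ J then ⊤ else ⊥ := by
    funext i; simp [hy, i.isLt]
  have hfn : (J.filter fun i : Fin n => (i : ℕ) < n) = J :=
    Finset.filter_true_of_mem fun i _ => i.isLt
  simp [hT, hyn, hfn]

end AuxPi

/-- if `f` is pseudo-median decomposable w.r.t. unary maps `φ i` satisfying
the boundary conditions, then `f(x) = ⋁_{I ⊆ [n]} (f(e_I) ∧ ⋀_{i∈I} φ i (x i))`, i.e.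
`f(x) = p(φ₁(x₁),…,φₙ(xₙ))` where `p` is the (polynomial) function `qDNF f`. -/
theorem pseudoMedianDecomp_dnf
    {n : ℕ} {M : Type*} {L : Fin n → Type*}
    [∀ i, LinearOrder (L i)] [∀ i, BoundedOrder (L i)]
    [LinearOrder M] [BoundedOrder M] (f : (∀ i, L i) → M) (φ : ∀ i, L i → M)
    (hφ : ∀ i, BoundaryCond (φ i)) (hmed : PseudoMedianDecomp f φ) :
    (∀ x, f x = (Finset.univ : Finset (Finset (Fin n))).sup fun I =>
        f (fun i => if i ∈ I then ⊤ else ⊥) ⊓ I.inf fun i => φ i (x i)) ∧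
    IsLatticePolynomial (qDNF f) := by
  classical
  refine ⟨pseudoMedianDecomp_dnf_aux f φ hφ hmed, ?_⟩
  unfold qDNF
  apply isLatticePolynomial_finsetSup
  intro I _
  exact IsLatticePolynomial.inf (IsLatticePolynomial.const _)
    (isLatticePolynomial_finsetInf I)
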